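/- Let q be an even integer with q ≥ 6 and let G be a C₄-free simple graph on q²+q vertices with maximum degree at most q+1 and at least (1/2)·q·(q+1)² − q edges. Then |X_{q+1}| − |X_{≤ q−1}| ≤ q² − q + 1, where X_{q+1} is the set of vertices of degree q+1 and X_{≤ q−1} is the set of vertices of degree at most q−1. -/

import Mathlib

open Finset

/-- A simple graph is `C₄`-free iff no two distinct vertices have two or more
common neighbors. -/
def C4Free {V : Type*} (G : SimpleGraph V) : Prop :=
  ∀ u v : V, u ≠ v → {w : V | G.Adj u w ∧ G.Adj v w}.Subsingleton


lemma even_card_of_fpf_involution {α : Type*} [DecidableEq α] :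
    ∀ (s : Finset α) (f : α → α), (∀ x ∈ s, f x ∈ s) → (∀ x ∈ s, f (f x) = x) →
      (∀ x ∈ s, f x ≠ x) → Even s.card := by
  intro s
  induction s using Finset.strongInduction with
  | _ s ih =>
    intro f hmem hinv hne
    rcases s.eq_empty_or_nonempty with rfl | ⟨x, hx⟩
    · simp
    · have hfx : f x ∈ s := hmem x hx
      have hfxne : f x ≠ x := hne x hx
      set s' := (s.erase x).erase (f x) with hs'
      have hxs' : x ∉ s' := by simp [hs']
      have hsub : s' ⊂ s := by
        refine Finset.ssubset_iff_of_subset ?_ |>.mpr ⟨x, hx, hxs'⟩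
        intro y hy
        simp only [hs', mem_erase] at hy
        exact hy.2.2
      have hcard : s.card = s'.card + 2 := by
        have h1 : (s.erase x).card = s.card - 1 := card_erase_of_mem hx
        have h2 : s'.card = (s.erase x).card - 1 :=
          card_erase_of_mem (by simp [mem_erase, hfxne, hfx])
        have h3 : 1 ≤ s.card := card_pos.mpr ⟨x, hx⟩
        have h4 : 2 ≤ s.card := by
          have := Finset.one_lt_card.mpr ⟨x, hx, f x, hfx, fun h => hfxne h.symm⟩
          omega
        omega
      have hmem' : ∀ y ∈ s', f y ∈ s' := by
        intro y hy
        simp only [hs', mem_erase] at hy ⊢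
        obtain ⟨hyfx, hyx, hys⟩ := hy
        refine ⟨?_, ?_, hmem y hys⟩
        · intro h; apply hyx; rw [← hinv y hys, h, hinv x hx]
        · intro h; apply hyfx; rw [← hinv y hys, h]
      have hinv' : ∀ y ∈ s', f (f y) = y := fun y hy => hinv y (by
        simp only [hs', mem_erase] at hy; exact hy.2.2)
      have hne' : ∀ y ∈ s', f y ≠ y := fun y hy => hne y (by
        simp only [hs', mem_erase] at hy; exact hy.2.2)
      have := ih s' hsub f hmem' hinv' hne'
      obtain ⟨k, hk⟩ := this
      exact ⟨k + 1, by omega⟩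


lemma exchange_sum {V : Type*} [Fintype V] [DecidableEq V] (G : SimpleGraph V)
    [DecidableRel G.Adj] (A : Finset V) (g : V → ℤ) :
    ∑ u ∈ univ, g u * ((A.filter (fun w => G.Adj u w)).card : ℤ)
      = ∑ w ∈ A, ∑ u ∈ G.neighborFinset w, g u := by
  have h1 : ∀ u : V, ((A.filter (fun w => G.Adj u w)).card : ℤ)
      = ∑ w ∈ A, if G.Adj u w then (1:ℤ) else 0 := by
    intro u
    rw [card_filter]
    push_cast
    rfl
  calc ∑ u ∈ univ, g u * ((A.filter (fun w => G.Adj u w)).card : ℤ)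
      = ∑ u ∈ univ, ∑ w ∈ A, (if G.Adj u w then g u else 0) := by
        refine sum_congr rfl fun u _ => ?_
        rw [h1, mul_sum]
        refine sum_congr rfl fun w _ => ?_
        split <;> simp
    _ = ∑ w ∈ A, ∑ u ∈ univ, (if G.Adj u w then g u else 0) := sum_comm
    _ = ∑ w ∈ A, ∑ u ∈ G.neighborFinset w, g u := by
        refine sum_congr rfl fun w _ => ?_
        rw [← sum_filter]
        refine sum_congr ?_ fun u _ => rfl
        ext u
        simp [SimpleGraph.mem_neighborFinset, SimpleGraph.adj_comm]

lemma parity_two_le {q : ℕ} (hqe : Even q) {V : Type*} [Fintype V] [DecidableEq V]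
    (hcard : Fintype.card V = q ^ 2 + q) (G : SimpleGraph V) [DecidableRel G.Adj]
    (hG : C4Free G) (v : V) (hv : G.degree v = q + 1) :
    2 ≤ ∑ u ∈ G.neighborFinset v, ((q : ℤ) + 1 - G.degree u) := by
  classical
  set n : ℕ := q ^ 2 + q with hn
  set N := G.neighborFinset v with hN
  set S : V → Finset V := fun u => (G.neighborFinset u).erase v with hSdef
  have hvmemN : ∀ u ∈ N, v ∈ G.neighborFinset u := by
    intro u hu
    rw [SimpleGraph.mem_neighborFinset] at hu ⊢
    exact hu.symm
  have hdisj : ∀ u1 ∈ N, ∀ u2 ∈ N, u1 ≠ u2 → Disjoint (S u1) (S u2) := by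
    intro u1 h1 u2 h2 hne
    rw [Finset.disjoint_left]
    intro w hw1 hw2
    simp only [hSdef, mem_erase, SimpleGraph.mem_neighborFinset] at hw1 hw2
    have hsub := hG u1 u2 hne
    have hv' : v ∈ {w : V | G.Adj u1 w ∧ G.Adj u2 w} := by
      constructor
      · exact (G.mem_neighborFinset v u1 |>.mp h1).symm
      · exact (G.mem_neighborFinset v u2 |>.mp h2).symm
    have hw' : w ∈ {w : V | G.Adj u1 w ∧ G.Adj u2 w} := ⟨hw1.2, hw2.2⟩
    exact hw1.1 (hsub hw' hv')
  have hScard : ∀ u ∈ N, ((S u).card : ℤ) = (G.degree u : ℤ) - 1 := by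
    intro u hu
    have h1 : (S u).card = (G.neighborFinset u).card - 1 :=
      card_erase_of_mem (hvmemN u hu)
    have hdeg : (G.neighborFinset u).card = G.degree u := G.card_neighborFinset_eq_degree u
    have h2 : 1 ≤ G.degree u := by
      rw [← hdeg]; exact card_pos.mpr ⟨v, hvmemN u hu⟩
    rw [h1, hdeg]
    omega
  have hNcard : N.card = q + 1 := by rw [hN, G.card_neighborFinset_eq_degree, hv]
  have hsub : N.biUnion S ⊆ univ.erase v := by
    intro w hw
    rw [mem_biUnion] at hw
    obtain ⟨u, hu, hwu⟩ := hw
    simp only [hSdef, mem_erase] at hwu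
    simp [hwu.1]
  have hbU : (N.biUnion S).card = ∑ u ∈ N, (S u).card := card_biUnion hdisj
  have hcarderase : (univ.erase v).card = n - 1 := by
    rw [card_erase_of_mem (mem_univ v), card_univ, hcard]
  have hn1 : 1 ≤ n := by
    rw [← hcard]; exact Fintype.card_pos_iff.mpr ⟨v⟩
  -- key integer quantities
  set k : ℤ := ∑ u ∈ N, ((q : ℤ) + 1 - G.degree u) with hk
  have hSck : (∑ u ∈ N, ((S u).card : ℤ)) = (n : ℤ) - k := by
    have : (∑ u ∈ N, ((S u).card : ℤ)) = ∑ u ∈ N, ((G.degree u : ℤ) - 1) :=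
      sum_congr rfl hScard
    rw [this, hk]
    have h2 : ∑ u ∈ N, ((G.degree u : ℤ) - 1)
        = ∑ u ∈ N, (((q : ℤ) + 1 - G.degree u) * (-1) + (q : ℤ)) := by
      refine sum_congr rfl fun u _ => by ring
    rw [h2, sum_add_distrib, ← sum_mul, sum_const, hNcard, hn]
    push_cast
    ring
  have hle : (∑ u ∈ N, ((S u).card : ℤ)) ≤ (n : ℤ) - 1 := by
    have h1 : (N.biUnion S).card ≤ n - 1 := by
      rw [← hcarderase]; exact card_le_card hsub
    have := hbU ▸ h1
    calc (∑ u ∈ N, ((S u).card : ℤ)) = ((∑ u ∈ N, (S u).card : ℕ) : ℤ) := by push_cast; rfl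
      _ ≤ ((n - 1 : ℕ) : ℤ) := by exact_mod_cast this
      _ = (n : ℤ) - 1 := by push_cast [Nat.cast_sub hn1]; ring
  have hk1 : 1 ≤ k := by omega
  by_contra hcon
  push_neg at hcon
  have hkeq : k = 1 := by omega
  -- equality case: the biUnion covers everything except v
  have hbUcard : (N.biUnion S).card = n - 1 := by
    have : (∑ u ∈ N, ((S u).card : ℤ)) = (n : ℤ) - 1 := by rw [hSck, hkeq]
    have h2 : ((∑ u ∈ N, (S u).card : ℕ) : ℤ) = (n : ℤ) - 1 := by
      push_cast
      exact this
    have h3 : ∑ u ∈ N, (S u).card = n - 1 := by omega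
    rw [hbU, h3]
  have hcover : N.biUnion S = univ.erase v := by
    apply eq_of_subset_of_card_le hsub
    rw [hbUcard, hcarderase]
  -- every u' ∈ N lies in exactly one S u
  have hex : ∀ w ∈ N, ∃ u, u ∈ N ∧ w ∈ S u := by
    intro w hw
    have hwv : w ≠ v := by
      intro h
      rw [h] at hw
      exact G.irrefl ((G.mem_neighborFinset v v).mp hw)
    have : w ∈ N.biUnion S := by
      rw [hcover, mem_erase]; exact ⟨hwv, mem_univ w⟩
    rw [mem_biUnion] at this
    obtain ⟨u, hu, hwu⟩ := this
    exact ⟨u, hu, hwu⟩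
  have huniq : ∀ w, ∀ u1, u1 ∈ N → w ∈ S u1 → ∀ u2, u2 ∈ N → w ∈ S u2 → u1 = u2 := by
    intro w u1 h1 hw1 u2 h2 hw2
    by_contra hne
    exact (Finset.disjoint_left.mp (hdisj u1 h1 u2 h2 hne) hw1) hw2
  set f : V → V := fun w => if h : ∃ u, u ∈ N ∧ w ∈ S u then h.choose else w with hf
  have hfspec : ∀ w ∈ N, f w ∈ N ∧ w ∈ S (f w) := by
    intro w hw
    have h := hex w hw
    simp only [hf, dif_pos h]
    exact h.choose_spec
  have hfmem : ∀ w ∈ N, f w ∈ N := fun w hw => (hfspec w hw).1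
  have hfne : ∀ w ∈ N, f w ≠ w := by
    intro w hw heq
    have := (hfspec w hw).2
    rw [heq] at this
    simp only [hSdef, mem_erase, SimpleGraph.mem_neighborFinset] at this
    exact G.irrefl this.2
  have hfinv : ∀ w ∈ N, f (f w) = w := by
    intro w hw
    have h1 := hfspec w hw
    have h2 := hfspec (f w) h1.1
    -- w is a valid "u" for f w : f w ∈ S w
    have h3 : f w ∈ S w := by
      have := h1.2
      simp only [hSdef, mem_erase, SimpleGraph.mem_neighborFinset] at this ⊢
      refine ⟨?_, this.2.symm⟩
      intro hfwv
      have := hfmem w hw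
      rw [hfwv] at this
      exact G.irrefl (G.mem_neighborFinset v v |>.mp this)
    exact huniq (f w) (f (f w)) h2.1 h2.2 w hw h3
  have heven : Even N.card := even_card_of_fpf_involution N f hfmem hfinv hfne
  rw [hNcard] at heven
  obtain ⟨a, ha⟩ := hqe
  obtain ⟨b, hb⟩ := heven
  omega


-- per-vertex upper bound
lemma pervertex_upper (q d e m x : ℤ) (hrel : d + e = q + 1) (hd : 0 ≤ d) (he : 0 ≤ e)
    (hm : m = min e 2) (hx : x = if 3 ≤ e then (e - 1) ^ 2 + 1 else 0) :
    e * d + x ≤ (q - 1) * e + m := by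
  by_cases h3 : 3 ≤ e
  · have hx' : x = (e - 1) ^ 2 + 1 := by rw [hx, if_pos h3]
    have hm' : m = 2 := by rw [hm]; exact min_eq_right (by omega)
    rw [hx', hm']
    nlinarith [hrel]
  · have hx' : x = 0 := by rw [hx, if_neg h3]
    have : e = 0 ∨ e = 1 ∨ e = 2 := by omega
    rcases this with h | h | h <;> subst h <;> simp [hm, hx'] <;> nlinarith [hrel]

set_option maxHeartbeats 1000000 in
/-- Let `q ≥ 6` be even and let `G` be a `C₄`-free graph on `q² + q` vertices
with maximum degree at most `q + 1` and at least `E₀ = q(q+1)²/2 - q` edges.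
Then `|X_{q+1}| - |X_{≤ q-1}| ≤ q² - q + 1`, where `X_{q+1}` is the set of
vertices of degree `q + 1` and `X_{≤ q-1}` the set of vertices of degree at
most `q - 1`. -/

theorem degCount_difference_bound (q : ℕ) (hq : 6 ≤ q) (hqe : Even q)
    (G : SimpleGraph (Fin (q ^ 2 + q))) [DecidableRel G.Adj] (hG : C4Free G)
    (hΔ : ∀ v, G.degree v ≤ q + 1)
    (he : q * (q + 1) ^ 2 / 2 - q ≤ G.edgeFinset.card) :
    ((Finset.univ.filter fun v => G.degree v = q + 1).card : ℤ) -
      ((Finset.univ.filter fun v => G.degree v ≤ q - 1).card : ℤ) ≤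
      q ^ 2 - q + 1 := by
  classical
  clear he
  set dl : Fin (q ^ 2 + q) → ℤ := fun v => (G.degree v : ℤ) with hdl
  set δ : Fin (q ^ 2 + q) → ℤ := fun v => (q : ℤ) + 1 - dl v with hδ
  have hdval : ∀ v, dl v = (G.degree v : ℤ) := fun v => rfl
  have hδval : ∀ v, δ v = (q : ℤ) + 1 - (G.degree v : ℤ) := fun v => rfl
  have hδ0 : ∀ v, 0 ≤ δ v := by
    intro v; have h1 := hΔ v; have h2 := hδval v; omega
  have hd0 : ∀ v, 0 ≤ dl v := by intro v; rw [hdval]; positivity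
  have hrel : ∀ v, dl v + δ v = (q : ℤ) + 1 := by intro v; rw [hδval, hdval]; ring
  set A : Finset (Fin (q ^ 2 + q)) := univ.filter (fun v => G.degree v = q + 1) with hA
  set B : Finset (Fin (q ^ 2 + q)) := univ.filter (fun v => G.degree v ≤ q - 1) with hB
  set T : Finset (Fin (q ^ 2 + q)) := univ.filter (fun v => ¬ G.degree v = q + 1) with hT
  set Hs : Finset (Fin (q ^ 2 + q)) := univ.filter (fun v => 3 ≤ δ v) with hHs
  set M : ℤ := ∑ v ∈ univ, min (δ v) 2 with hM
  set D : ℤ := ∑ v ∈ univ, δ v with hD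
  set X : ℤ := ∑ u ∈ Hs, (δ u - 2) with hX
  set t : ℤ := (Hs.card : ℤ) with ht
  set g : Fin (q ^ 2 + q) → ℤ := fun u => if 3 ≤ δ u then δ u - 2 else 0 with hg
  -- cardinalities
  have hAT : A.card + T.card = q ^ 2 + q := by
    rw [hA, hT, card_filter_add_card_filter_not, card_univ, Fintype.card_fin]
  -- M = |T| + |B|
  have hMTB : M = (T.card : ℤ) + (B.card : ℤ) := by
    have h1 : ∀ v ∈ univ, min (δ v) 2 =
        (if ¬ G.degree v = q + 1 then (1:ℤ) else 0)
          + (if G.degree v ≤ q - 1 then (1:ℤ) else 0) := by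
      intro v _
      have hdv := hΔ v
      have h := hδval v
      simp only [min_def]
      split_ifs <;> omega
    rw [hM, sum_congr rfl h1, sum_add_distrib]
    congr 1
    · rw [hT, card_filter]; push_cast; rfl
    · rw [hB, card_filter]; push_cast; rfl
  -- Hs ⊆ B
  have hHsB : t ≤ (B.card : ℤ) := by
    have hsub : Hs ⊆ B := by
      intro v hv
      rw [hHs, mem_filter] at hv
      rw [hB, mem_filter]
      refine ⟨mem_univ v, ?_⟩
      have h2 := hv.2
      have h := hδval v
      omega
    rw [ht]
    exact_mod_cast card_le_card hsub
  have hX0 : 0 ≤ X := by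
    rw [hX]
    refine sum_nonneg fun u hu => ?_
    rw [hHs, mem_filter] at hu
    omega
  have ht0 : 0 ≤ t := by rw [ht]; positivity
  -- D = M + X
  have hDMX : D = M + X := by
    have h1 : ∀ v ∈ univ, δ v - min (δ v) 2 = (if 3 ≤ δ v then δ v - 2 else 0) := by
      intro v _
      have := hδ0 v
      simp only [min_def]
      split_ifs <;> omega
    have h2 : D - M = X := by
      rw [hD, hM, ← sum_sub_distrib, sum_congr rfl h1, hX, hHs, sum_filter]
    omega
  -- Inequality I
  have hineqI : (∑ v ∈ univ, δ v * dl v) + (∑ u ∈ Hs, ((δ u - 1) ^ 2 + 1))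
      ≤ ((q : ℤ) - 1) * D + M := by
    have h1 : ∀ v ∈ univ, δ v * dl v + (if 3 ≤ δ v then (δ v - 1) ^ 2 + 1 else 0)
        ≤ ((q : ℤ) - 1) * δ v + min (δ v) 2 :=
      fun v _ => pervertex_upper q (dl v) (δ v) _ _ (hrel v) (hd0 v) (hδ0 v) rfl rfl
    have h2 := sum_le_sum h1
    rw [sum_add_distrib] at h2
    rw [hHs, sum_filter]
    calc (∑ v ∈ univ, δ v * dl v)
          + ∑ v ∈ univ, (if 3 ≤ δ v then (δ v - 1) ^ 2 + 1 else 0)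
        ≤ ∑ v ∈ univ, (((q : ℤ) - 1) * δ v + min (δ v) 2) := h2
      _ = ((q : ℤ) - 1) * D + M := by
          rw [sum_add_distrib, ← mul_sum, ← hD, ← hM]
  -- Inequality II
  have hineqII : 2 * (A.card : ℤ) + (∑ u ∈ Hs, (δ u - 2) * dl u)
      ≤ ∑ v ∈ univ, δ v * dl v := by
    have hsplit : ∀ v, dl v = ((A.filter (fun w => G.Adj v w)).card : ℤ)
        + ((T.filter (fun w => G.Adj v w)).card : ℤ) := by
      intro v
      have h1 : (univ.filter (fun w => G.Adj v w)).card = G.degree v := by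
        rw [← SimpleGraph.neighborFinset_eq_filter, G.card_neighborFinset_eq_degree]
      have h2 : A.filter (fun w => G.Adj v w)
          = (univ.filter (fun w => G.Adj v w)).filter (fun w => G.degree w = q + 1) := by
        rw [hA, filter_filter, filter_filter]
        exact filter_congr fun w _ => by tauto
      have h3 : T.filter (fun w => G.Adj v w)
          = (univ.filter (fun w => G.Adj v w)).filter (fun w => ¬ G.degree w = q + 1) := by
        rw [hT, filter_filter, filter_filter]
        exact filter_congr fun w _ => by tauto
      have h4 := card_filter_add_card_filter_not
        (s := univ.filter (fun w => G.Adj v w)) (p := fun w => G.degree w = q + 1)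
      rw [hdval, ← h1, ← h4, h2, h3]
      push_cast
      ring
    -- parity bound for each vertex of A
    have hparA : ∀ w ∈ A, 2 + ∑ u ∈ (G.neighborFinset w).filter (fun u => 3 ≤ δ u), (δ u - 2)
        ≤ ∑ u ∈ G.neighborFinset w, δ u := by
      intro w hw
      have hdeg : G.degree w = q + 1 := by
        rw [hA, mem_filter] at hw; exact hw.2
      by_cases hF : ((G.neighborFinset w).filter (fun u => 3 ≤ δ u)).Nonempty
      · obtain ⟨u0, hu0⟩ := hF
        have hsub := filter_subset (fun u => 3 ≤ δ u) (G.neighborFinset w)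
        have h1 : ∑ u ∈ (G.neighborFinset w).filter (fun u => 3 ≤ δ u), δ u
            ≤ ∑ u ∈ G.neighborFinset w, δ u :=
          sum_le_sum_of_subset_of_nonneg hsub (fun i _ _ => hδ0 i)
        have h2 : ∑ u ∈ (G.neighborFinset w).filter (fun u => 3 ≤ δ u), (δ u - 2)
            = (∑ u ∈ (G.neighborFinset w).filter (fun u => 3 ≤ δ u), δ u)
              - 2 * (((G.neighborFinset w).filter (fun u => 3 ≤ δ u)).card : ℤ) := by
          rw [sum_sub_distrib, sum_const]
          push_cast
          ring
        have h3 : (1 : ℤ) ≤ (((G.neighborFinset w).filter (fun u => 3 ≤ δ u)).card : ℤ) := by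
          exact_mod_cast card_pos.mpr ⟨u0, hu0⟩
        linarith
      · rw [not_nonempty_iff_eq_empty] at hF
        rw [hF, sum_empty, add_zero]
        have hpar := parity_two_le hqe (Fintype.card_fin _) G hG w hdeg
        calc (2:ℤ) ≤ ∑ u ∈ G.neighborFinset w, ((q:ℤ) + 1 - G.degree u) := hpar
          _ = ∑ u ∈ G.neighborFinset w, δ u :=
              sum_congr rfl fun u _ => (hδval u).symm
    -- sum over A
    have hsumA : 2 * (A.card : ℤ)
        + ∑ w ∈ A, ∑ u ∈ G.neighborFinset w, g u
        ≤ ∑ w ∈ A, ∑ u ∈ G.neighborFinset w, δ u := by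
      have h0 : ∀ w ∈ A, 2 + ∑ u ∈ G.neighborFinset w, g u
          ≤ ∑ u ∈ G.neighborFinset w, δ u := by
        intro w hw
        have h2 := hparA w hw
        simp only [hg]
        rw [← sum_filter]
        exact h2
      have h1 := sum_le_sum h0
      rw [sum_add_distrib, sum_const] at h1
      calc 2 * (A.card : ℤ) + ∑ w ∈ A, ∑ u ∈ G.neighborFinset w, g u
          = A.card • (2:ℤ) + ∑ w ∈ A, ∑ u ∈ G.neighborFinset w, g u := by
            push_cast; ring
        _ ≤ ∑ w ∈ A, ∑ u ∈ G.neighborFinset w, δ u := h1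
    have hexA := exchange_sum G A δ
    have hexAg := exchange_sum G A g
    have hcT : ∀ u, g u * ((T.filter (fun w => G.Adj u w)).card : ℤ)
        ≤ δ u * ((T.filter (fun w => G.Adj u w)).card : ℤ) := by
      intro u
      apply mul_le_mul_of_nonneg_right
      · simp only [hg]
        split_ifs with h
        · omega
        · exact hδ0 u
      · positivity
    have hgd : ∑ u ∈ univ, g u * dl u = ∑ u ∈ Hs, (δ u - 2) * dl u := by
      rw [hHs, sum_filter]
      refine sum_congr rfl fun u _ => ?_
      simp only [hg]
      split_ifs <;> simp
    calc 2 * (A.card : ℤ) + (∑ u ∈ Hs, (δ u - 2) * dl u)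
        = 2 * (A.card : ℤ) + ∑ u ∈ univ, g u * dl u := by rw [hgd]
      _ = 2 * (A.card : ℤ) + ∑ u ∈ univ, (g u * ((A.filter (fun w => G.Adj u w)).card : ℤ)
            + g u * ((T.filter (fun w => G.Adj u w)).card : ℤ)) := by
          congr 1
          refine sum_congr rfl fun u _ => ?_
          rw [hsplit u]
          ring
      _ = (2 * (A.card : ℤ) + ∑ w ∈ A, ∑ u ∈ G.neighborFinset w, g u)
            + ∑ u ∈ univ, g u * ((T.filter (fun w => G.Adj u w)).card : ℤ) := by
          rw [sum_add_distrib, hexAg]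
          ring
      _ ≤ (∑ w ∈ A, ∑ u ∈ G.neighborFinset w, δ u)
            + ∑ u ∈ univ, δ u * ((T.filter (fun w => G.Adj u w)).card : ℤ) := by
          exact add_le_add hsumA (sum_le_sum fun u _ => hcT u)
      _ = ∑ u ∈ univ, (δ u * ((A.filter (fun w => G.Adj u w)).card : ℤ)
            + δ u * ((T.filter (fun w => G.Adj u w)).card : ℤ)) := by
          rw [sum_add_distrib, hexA]
      _ = ∑ v ∈ univ, δ v * dl v := by
          refine sum_congr rfl fun u _ => ?_
          rw [hsplit u]
          ring
  -- identity on Hs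
  have hident : (∑ u ∈ Hs, (δ u - 2) * dl u) + (∑ u ∈ Hs, ((δ u - 1) ^ 2 + 1))
      = ((q : ℤ) + 1) * X + 2 * t := by
    have h1 : ∀ u ∈ Hs, (δ u - 2) * dl u + ((δ u - 1) ^ 2 + 1)
        = ((q : ℤ) + 1) * (δ u - 2) + 2 := by
      intro u _
      have h := hrel u
      linear_combination (δ u - 2) * h
    rw [← sum_add_distrib, sum_congr rfl h1, sum_add_distrib, ← mul_sum, ← hX, sum_const, ht]
    push_cast
    ring
  -- III
  have h1 : (A.card : ℤ) + (T.card : ℤ) = ((q ^ 2 + q : ℕ) : ℤ) := by exact_mod_cast hAT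
  have hnval : ((q ^ 2 + q : ℕ) : ℤ) = (q : ℤ) ^ 2 + (q : ℤ) := by push_cast; ring
  have hineqIII : ((q : ℤ) ^ 2 + (q : ℤ)) - M + t ≤ (A.card : ℤ) := by
    linarith [hMTB, hHsB]
  -- combine
  have hfinal : 2 * (((q : ℤ) ^ 2 + (q : ℤ)) - M + t) + ((q : ℤ) + 1) * X + 2 * t
      ≤ ((q : ℤ) - 1) * (M + X) + M := by
    have h2 := add_le_add hineqII (le_refl (∑ u ∈ Hs, ((δ u - 1) ^ 2 + 1)))
    rw [add_assoc, hident] at h2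
    have h3 := le_trans h2 hineqI
    rw [← hDMX]
    linarith [hineqIII]
  have hq' : (6 : ℤ) ≤ (q : ℤ) := by exact_mod_cast hq
  have hMlb : 2 * (q : ℤ) - 1 ≤ M := by
    by_contra hcon
    push_neg at hcon
    have hM2 : M ≤ 2 * (q : ℤ) - 2 := by omega
    nlinarith [hX0, ht0, hfinal]
  linarith [hMTB, h1, hMlb, hnval]
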